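/- A matrix A with S(A) ≠ 0 is a critical point of F restricted to its conjugation orbit {gAg⁻¹ : g ∈ GL_{n-1}(ℝ)} if and only if c₂(A)[A,Aᵀ] = 2c₃(A)[Aᵀ,[A,[A,Aᵀ]]]. -/

import Mathlib

open Matrix

/-- Symmetric part `S(A) = (A + Aᵀ)/2`. -/
noncomputable def Ssym {m : ℕ} (A : Matrix (Fin m) (Fin m) ℝ) : Matrix (Fin m) (Fin m) ℝ :=
  (1 / 2 : ℝ) • (A + Aᵀ)

/-- Commutator of matrices. -/
def brk {m : ℕ} (X Y : Matrix (Fin m) (Fin m) ℝ) : Matrix (Fin m) (Fin m) ℝ :=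
  X * Y - Y * X

/-- Squared norm `|X|² = tr (X Xᵀ)`. -/
noncomputable def nsq {m : ℕ} (X : Matrix (Fin m) (Fin m) ℝ) : ℝ :=
  (X * Xᵀ).trace

/-- The Ricci pinching functional of the almost-abelian solvmanifold attached to `A`:
`F(A) = (tr S(A)² + (tr A)²)² / (tr S(A)² (tr S(A)² + (tr A)²) + ¼|[A,Aᵀ]|²)`. -/
noncomputable def Fpinch {m : ℕ} (A : Matrix (Fin m) (Fin m) ℝ) : ℝ :=
  ((Ssym A * Ssym A).trace + A.trace ^ 2) ^ 2 /
    ((Ssym A * Ssym A).trace * ((Ssym A * Ssym A).trace + A.trace ^ 2)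
      + (1 / 4) * nsq (brk A Aᵀ))

/-- Coefficient `c₂(A) = (tr S(A)²+(tr A)²)(−2(tr A)²(tr S(A)²+(tr A)²)+|[A,Aᵀ]|²)`. -/
noncomputable def c2 {m : ℕ} (A : Matrix (Fin m) (Fin m) ℝ) : ℝ :=
  ((Ssym A * Ssym A).trace + A.trace ^ 2) *
    (-2 * A.trace ^ 2 * ((Ssym A * Ssym A).trace + A.trace ^ 2) + nsq (brk A Aᵀ))

/-- Coefficient `c₃(A) = (tr S(A)²+(tr A)²)²`. -/
noncomputable def c3 {m : ℕ} (A : Matrix (Fin m) (Fin m) ℝ) : ℝ :=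
  ((Ssym A * Ssym A).trace + A.trace ^ 2) ^ 2

attribute [local instance] Matrix.normedAddCommGroup Matrix.normedSpace

/-! ### Auxiliary infrastructure -/

abbrev MM (m : ℕ) := Matrix (Fin m) (Fin m) ℝ

noncomputable def trCLM (m : ℕ) : MM m →L[ℝ] ℝ :=
  LinearMap.toContinuousLinearMap (Matrix.traceLinearMap (Fin m) ℝ ℝ)

noncomputable def transCLM (m : ℕ) : MM m →L[ℝ] MM m :=
  LinearMap.toContinuousLinearMap ((Matrix.transposeLinearEquiv (Fin m) (Fin m) ℝ ℝ).toLinearMap)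

noncomputable def mulCLM (m : ℕ) : MM m →L[ℝ] MM m →L[ℝ] MM m :=
  LinearMap.toContinuousLinearMap
    ((LinearMap.toContinuousLinearMap : (MM m →ₗ[ℝ] MM m) ≃ₗ[ℝ] (MM m →L[ℝ] MM m)).toLinearMap.comp
      (LinearMap.mul ℝ (MM m)))

variable {m : ℕ}

@[simp] lemma trCLM_apply (X : MM m) : trCLM m X = X.trace := rfl
@[simp] lemma transCLM_apply (X : MM m) : transCLM m X = Xᵀ := rfl
@[simp] lemma mulCLM_apply (X Y : MM m) : mulCLM m X Y = X * Y := rfl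

lemma hasFDerivAt_mulm {f g : MM m → MM m} {f' g' : MM m →L[ℝ] MM m} {A : MM m}
    (hf : HasFDerivAt f f' A) (hg : HasFDerivAt g g' A) :
    HasFDerivAt (fun X => f X * g X)
      (HAdd.hAdd (α := MM m →L[ℝ] MM m) (β := MM m →L[ℝ] MM m) ((mulCLM m (f A)).comp g') (((mulCLM m).flip (g A)).comp f')) A := by
  have h := ((mulCLM m).isBoundedBilinearMap.hasFDerivAt (f A, g A)).comp A (hf.prodMk hg)
  exact h

/-! ### Trace identities -/

lemma trTT (X Y : MM m) : (X * Yᵀ).trace = (Y * Xᵀ).trace := by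
  rw [← Matrix.trace_transpose (X * Yᵀ), Matrix.transpose_mul, Matrix.transpose_transpose,
    Matrix.trace_mul_comm]

lemma trXT (X W : MM m) : (Xᵀ * W).trace = (X * Wᵀ).trace := by
  rw [← Matrix.trace_transpose (Xᵀ * W), Matrix.transpose_mul, Matrix.transpose_transpose,
    Matrix.trace_mul_comm]

lemma trBr (A B M : MM m) : (brk A B * M).trace = (B * (M * A - A * M)).trace := by
  rw [brk, Matrix.sub_mul, Matrix.trace_sub, Matrix.mul_sub, Matrix.trace_sub,
    Matrix.trace_mul_cycle A B M, ← Matrix.mul_assoc, Matrix.trace_mul_comm (M * A) B,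
    Matrix.mul_assoc]
  rw [Matrix.mul_assoc]

lemma trace_brk (A B : MM m) : (brk A B).trace = 0 := by
  rw [brk, Matrix.trace_sub, Matrix.trace_mul_comm, sub_self]

lemma Ssym_transpose (A : MM m) : (Ssym A)ᵀ = Ssym A := by
  simp [Ssym, Matrix.transpose_smul, Matrix.transpose_add, add_comm]

lemma SA_comm (A : MM m) : Ssym A * A - A * Ssym A = (-(1/2) : ℝ) • brk A Aᵀ := by
  have h : (A + Aᵀ) * A - A * (A + Aᵀ) = -(A * Aᵀ - Aᵀ * A) := by noncomm_ring
  simp only [Ssym, brk, Matrix.smul_mul, Matrix.mul_smul, ← smul_sub]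
  rw [h, smul_neg, ← neg_smul]

lemma Lem2 (A B : MM m) :
    Matrix.trace (Ssym A * (1/2 : ℝ) • (brk A B + (brk A B)ᵀ)
      + (1/2 : ℝ) • (brk A B + (brk A B)ᵀ) * Ssym A) = -(B * brk A Aᵀ).trace := by
  set X := brk A B with hX
  rw [Matrix.trace_add, Matrix.trace_mul_comm ((1/2 : ℝ) • (X + Xᵀ)) (Ssym A)]
  rw [Matrix.mul_smul, Matrix.trace_smul, Matrix.mul_add, Matrix.trace_add]
  rw [trTT (Ssym A) X, Ssym_transpose, Matrix.trace_mul_comm X (Ssym A)]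
  have h : (Ssym A * X).trace = (B * ((-(1/2) : ℝ) • brk A Aᵀ)).trace := by
    rw [Matrix.trace_mul_comm, hX, trBr, ← SA_comm]
  rw [h, Matrix.mul_smul, Matrix.trace_smul]
  simp only [smul_eq_mul]
  ring

lemma Lem3 (A B : MM m) :
    Matrix.trace ((A * Aᵀ - Aᵀ * A) * (A * (brk A B)ᵀ + brk A B * Aᵀ - (Aᵀ * brk A B + (brk A B)ᵀ * A))ᵀ
      + (A * (brk A B)ᵀ + brk A B * Aᵀ - (Aᵀ * brk A B + (brk A B)ᵀ * A)) * (A * Aᵀ - Aᵀ * A)ᵀ)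
    = 4 * (B * ((Aᵀ * brk A Aᵀ - brk A Aᵀ * Aᵀ) * A
        - A * (Aᵀ * brk A Aᵀ - brk A Aᵀ * Aᵀ))).trace := by
  set X := brk A B with hX
  set C : MM m := A * Aᵀ - Aᵀ * A with hC
  set K : MM m := Aᵀ * C - C * Aᵀ with hK
  have hCB : brk A Aᵀ = C := rfl
  have hCsym : Cᵀ = C := by
    rw [hC]; simp [Matrix.transpose_sub, Matrix.transpose_mul, Matrix.transpose_transpose]
  set Y : MM m := A * Xᵀ + X * Aᵀ - (Aᵀ * X + Xᵀ * A) with hY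
  have h0 : (C * Yᵀ).trace = (Y * C).trace := by rw [trTT C Y, hCsym]
  rw [Matrix.trace_add, h0, hCsym]
  have hYC : (Y * C).trace = 2 * (X * K).trace := by
    rw [hY, Matrix.sub_mul, Matrix.add_mul, Matrix.add_mul, Matrix.trace_sub, Matrix.trace_add,
      Matrix.trace_add]
    have h1 : (A * Xᵀ * C).trace = (Xᵀ * (C * A)).trace := by
      rw [Matrix.trace_mul_cycle A Xᵀ C, Matrix.trace_mul_comm]
    have h2 : (Aᵀ * X * C).trace = (X * (C * Aᵀ)).trace := by
      rw [Matrix.trace_mul_cycle Aᵀ X C, Matrix.trace_mul_comm]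
    have h3 : (Xᵀ * A * C).trace = (Xᵀ * (A * C)).trace := by rw [Matrix.mul_assoc]
    have h4 : (X * Aᵀ * C).trace = (X * (Aᵀ * C)).trace := by rw [Matrix.mul_assoc]
    rw [h1, h2, h3, h4]
    have h5 : (Xᵀ * (C * A)).trace - (Xᵀ * (A * C)).trace = (X * K).trace := by
      rw [← Matrix.trace_sub, ← Matrix.mul_sub, trXT, Matrix.transpose_sub, Matrix.transpose_mul,
        Matrix.transpose_mul, hCsym, hK]
    have h6 : (X * (Aᵀ * C)).trace - (X * (C * Aᵀ)).trace = (X * K).trace := by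
      rw [← Matrix.trace_sub, ← Matrix.mul_sub, hK]
    ring_nf
    ring_nf at h5 h6
    linarith [h5, h6]
  rw [hYC, hX, trBr, hCB, ← hK]
  ring

/-! ### Positivity and nondegeneracy -/

lemma trace_mul_transpose_eq_sum (X : MM m) : (X * Xᵀ).trace = ∑ i, ∑ j, X i j ^ 2 := by
  simp [Matrix.trace, Matrix.mul_apply, Matrix.diag, sq]

lemma trace_mul_transpose_nonneg (X : MM m) : 0 ≤ (X * Xᵀ).trace := by
  rw [trace_mul_transpose_eq_sum]; positivity

lemma trace_mul_transpose_pos (X : MM m) (hX : X ≠ 0) : 0 < (X * Xᵀ).trace := by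
  rw [trace_mul_transpose_eq_sum]
  obtain ⟨i, j, hij⟩ : ∃ i j, X i j ≠ 0 := by
    by_contra h
    push_neg at h
    exact hX (Matrix.ext fun i j => by simpa using h i j)
  have h1 : 0 < ∑ j', X i j' ^ 2 :=
    Finset.sum_pos' (fun _ _ => sq_nonneg _) ⟨j, Finset.mem_univ j, by positivity⟩
  exact Finset.sum_pos' (fun _ _ => Finset.sum_nonneg fun _ _ => sq_nonneg _)
    ⟨i, Finset.mem_univ i, h1⟩

lemma eq_zero_of_forall_trace (M : MM m) (h : ∀ B : MM m, (B * M).trace = 0) : M = 0 := by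
  by_contra hM
  have hpos := trace_mul_transpose_pos M hM
  rw [Matrix.trace_mul_comm] at hpos
  rw [h Mᵀ] at hpos
  exact lt_irrefl 0 hpos

lemma jacobi (A : MM m) :
    brk Aᵀ (brk A (brk A Aᵀ)) =
      A * (Aᵀ * brk A Aᵀ - brk A Aᵀ * Aᵀ) - (Aᵀ * brk A Aᵀ - brk A Aᵀ * Aᵀ) * A := by
  simp only [brk]
  noncomm_ring

/-! ### Main theorem -/

/-- `A` (with `S(A) ≠ 0`) is a critical point of `F` restricted to its
conjugation orbit (i.e. the derivative of `F` at `A` vanishes on the tangent space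
`[A, M_{n-1}(ℝ)]` of the orbit) iff `c₂(A)[A,Aᵀ] = 2c₃(A)[Aᵀ,[A,[A,Aᵀ]]]`. -/
theorem stmt_12 (m : ℕ) (A : Matrix (Fin m) (Fin m) ℝ) (hS : Ssym A ≠ 0) :
    (∀ B : Matrix (Fin m) (Fin m) ℝ, fderiv ℝ Fpinch A (brk A B) = 0) ↔
      c2 A • brk A Aᵀ = (2 * c3 A) • brk Aᵀ (brk A (brk A Aᵀ)) := by
  classical
  -- positivity of denominator
  have hf1pos : 0 < (Ssym A * Ssym A).trace := by
    have hs : Ssym A * Ssym A = Ssym A * (Ssym A)ᵀ := by rw [Ssym_transpose]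
    rw [hs]; exact trace_mul_transpose_pos _ hS
  have hnsq : 0 ≤ nsq (brk A Aᵀ) := trace_mul_transpose_nonneg _
  have hDpos : 0 < (Ssym A * Ssym A).trace * ((Ssym A * Ssym A).trace + A.trace ^ 2)
      + (1 / 4) * nsq (brk A Aᵀ) := by
    nlinarith [sq_nonneg A.trace]
  have hD0 : (Ssym A * Ssym A).trace * ((Ssym A * Ssym A).trace + A.trace ^ 2)
      + (1 / 4) * nsq (brk A Aᵀ) ≠ 0 := ne_of_gt hDpos
  -- derivative computation
  have htr : HasFDerivAt (fun X : MM m => Xᵀ) (transCLM m) A := (transCLM m).hasFDerivAt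
  have hid : HasFDerivAt (fun X : MM m => X) (ContinuousLinearMap.id ℝ (MM m)) A := hasFDerivAt_id A
  have hSd : HasFDerivAt (fun X : MM m => Ssym X)
      ((1/2 : ℝ) • (ContinuousLinearMap.id ℝ (MM m) + transCLM m)) A :=
    ((1/2 : ℝ) • (ContinuousLinearMap.id ℝ (MM m) + transCLM m)).hasFDerivAt
  have hSS := hasFDerivAt_mulm hSd hSd
  have hf1 := (trCLM m).hasFDerivAt.comp A hSS
  have hf2 := (hasDerivAt_pow 2 A.trace).comp_hasFDerivAt A (trCLM m).hasFDerivAt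
  have hsum := hf1.add hf2
  have hN := (hasDerivAt_pow 2 _).comp_hasFDerivAt A hsum
  have hC := hasFDerivAt_mulm hid htr |>.sub (hasFDerivAt_mulm htr hid)
  have hCt := (transCLM m).hasFDerivAt.comp A hC
  have hf3 := (trCLM m).hasFDerivAt.comp A (hasFDerivAt_mulm hC hCt)
  have hD := (hf1.mul hsum).add (hf3.const_mul (1/4 : ℝ))
  have hinv := (hasDerivAt_inv hD0).comp_hasFDerivAt A hD
  have hF := (hN.mul hinv).congr_of_eventuallyEq (f₁ := Fpinch) <| Filter.Eventually.of_forall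
    (fun X => by rw [Fpinch, div_eq_mul_inv]; rfl)
  -- the key formula
  set C : MM m := brk A Aᵀ with hCdef
  set K : MM m := Aᵀ * C - C * Aᵀ with hKdef
  set Mmat : MM m := (-(1/2) * c2 A) • C - c3 A • (K * A - A * K) with hMdef
  set D0 : ℝ := (Ssym A * Ssym A).trace * ((Ssym A * Ssym A).trace + A.trace ^ 2)
      + (1 / 4) * nsq (brk A Aᵀ) with hD0def
  have key : ∀ B : MM m, fderiv ℝ Fpinch A (brk A B) = (D0 ^ 2)⁻¹ * (B * Mmat).trace := by
    intro B
    have hval := congrArg (fun (L : MM m →L[ℝ] ℝ) => L (brk A B)) hF.fderiv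
    simp only [ContinuousLinearMap.add_apply, ContinuousLinearMap.coe_comp', Function.comp_apply,
      ContinuousLinearMap.coe_smul', Pi.smul_apply, ContinuousLinearMap.smul_apply,
      ContinuousLinearMap.flip_apply, ContinuousLinearMap.sub_apply, ContinuousLinearMap.coe_sub',
      Pi.sub_apply, ContinuousLinearMap.id_apply, trCLM_apply, transCLM_apply, mulCLM_apply,
      smul_eq_mul] at hval
    rw [show fderiv ℝ Fpinch A (brk A B) = ((Ssym A * Ssym A).trace + A.trace ^ 2) ^ 2 * (-(D0 ^ 2)⁻¹ * ((Ssym A * Ssym A).trace * ((Ssym A * (1/2:ℝ) • (brk A B + (brk A B)ᵀ) + (1/2:ℝ) • (brk A B + (brk A B)ᵀ) * Ssym A).trace + ((2:ℕ):ℝ) * A.trace ^ (2 - 1) * (brk A B).trace) + ((Ssym A * Ssym A).trace + A.trace ^ 2) * (Ssym A * (1/2:ℝ) • (brk A B + (brk A B)ᵀ) + (1/2:ℝ) • (brk A B + (brk A B)ᵀ) * Ssym A).trace + 1 / 4 * ((A * Aᵀ - Aᵀ * A) * (A * (brk A B)ᵀ + brk A B * Aᵀ - (Aᵀ * brk A B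 + (brk A B)ᵀ * A))ᵀ + (A * (brk A B)ᵀ + brk A B * Aᵀ - (Aᵀ * brk A B + (brk A B)ᵀ * A)) * (A * Aᵀ - Aᵀ * A)ᵀ).trace)) + ((Ssym A * Ssym A).trace * ((Ssym A * Ssym A).trace + A.trace ^ 2) + 1 / 4 * ((A * Aᵀ - Aᵀ * A) * (A * Aᵀ - Aᵀ * A)ᵀ).trace)⁻¹ * (((2:ℕ):ℝ) * ((Ssym A * Ssym A).trace + A.trace ^ 2) ^ (2 - 1) * ((Ssym A * (1/2:ℝ) • (brk A B + (brk A B)ᵀ) + (1/2:ℝ) • (brk A B + (brk A B)ᵀ) * Ssym A).trace + ((2:ℕ):ℝ) * A.trace ^ (2 - 1) * (brk A B).trace)) from hval, Lem2, Lem3, trace_brk]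
    have hrfl : ((A * Aᵀ - Aᵀ * A) * (A * Aᵀ - Aᵀ * A)ᵀ).trace = nsq (brk A Aᵀ) := rfl
    rw [hrfl]
    have htrM : (B * Mmat).trace
        = (-(1/2) * c2 A) * (B * C).trace - c3 A * (B * (K * A - A * K)).trace := by
      rw [hMdef, Matrix.mul_sub, Matrix.trace_sub, Matrix.mul_smul, Matrix.mul_smul,
        Matrix.trace_smul, Matrix.trace_smul, smul_eq_mul, smul_eq_mul]
    rw [htrM, ← hCdef, ← hKdef, ← hD0def]
    simp only [c2, c3, pow_one, Nat.cast_ofNat]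
    field_simp
    ring
  -- equivalence of the matrix equations
  have hMsplit : Mmat = (-(1/2) : ℝ) • (c2 A • C - (2 * c3 A) • (A * K - K * A)) := by
    rw [hMdef]; module
  have hMzero : Mmat = 0 ↔ c2 A • brk A Aᵀ = (2 * c3 A) • brk Aᵀ (brk A (brk A Aᵀ)) := by
    rw [jacobi A, ← hCdef, ← hKdef, hMsplit, smul_eq_zero,
      or_iff_right (by norm_num : ¬(-(1/2) : ℝ) = 0), sub_eq_zero]
  constructor
  · intro h
    rw [← hMzero]
    apply eq_zero_of_forall_trace
    intro B
    have hB := h B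
    rw [key B] at hB
    have hD2 : (D0 ^ 2)⁻¹ ≠ 0 := by positivity
    exact (mul_eq_zero.mp hB).resolve_left hD2
  · intro h B
    rw [key B, hMzero.mpr h]
    simp
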